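/- Let f and B be holomorphic functions on the open unit disc 𝔻 with f(0) = 1 and with B(0) a real number in (0,1]. Let c ∈ (−π,π], let σ be a finite nonnegative Borel measure on [−π,π], and let w : [−π,π] → ℝ be Lebesgue integrable. Assume that for all z ∈ 𝔻, f(z) = B(z)·exp(ic − K_σ(z))·exp(K_w(z)), where K_σ(z) = (1/2π)∫_{−π}^{π}(e^{it}+z)/(e^{it}−z) dσ(t) and K_w(z) = (1/2π)∫_{−π}^{π}(e^{it}+z)/(e^{it}−z)·w(t) dt. Then c = 0, and −log B(0) = (1/2π)·(∫_{−π}^{π} w(t) dt − σ([−π,π])) ≥ 0. Moreover, for every integer n ≥ 1 the n-th Taylor coefficient at 0 of the holomorphic function z ↦ K_w(z) − K_σ(z) equals (1/π)·(∫_{−π}^{π} e^{−int} w(t) dt − ∫_{−π}^{π} e^{−int} dσ(t)). -/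

import Mathlib

open MeasureTheory

/-- `K_σ(z) = (1/2π)∫_{-π}^{π} (e^{it}+z)/(e^{it}-z) dσ(t)` for a measure `σ` on `[-π,π]`. -/
noncomputable def Ksigma (σ : Measure ℝ) (z : ℂ) : ℂ :=
  (1 / (2 * Real.pi) : ℂ) * ∫ t in Set.Icc (-Real.pi) Real.pi,
    (Complex.exp (Complex.I * t) + z) / (Complex.exp (Complex.I * t) - z) ∂σ

/-- `K_w(z) = (1/2π)∫_{-π}^{π} (e^{it}+z)/(e^{it}-z)·w(t) dt` for integrable `w`. -/
noncomputable def Kw (w : ℝ → ℝ) (z : ℂ) : ℂ :=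
  (1 / (2 * Real.pi) : ℂ) * ∫ t in Set.Icc (-Real.pi) Real.pi,
    ((Complex.exp (Complex.I * t) + z) / (Complex.exp (Complex.I * t) - z)) * (w t : ℂ)

/-- The `n`-th Taylor coefficient (times `z^n`) of `(e^{it}+z)/(e^{it}-z)`. -/
noncomputable def ecoef (n : ℕ) (t : ℝ) : ℂ :=
  if n = 0 then 1 else 2 * Complex.exp (-Complex.I * n * t)

lemma ecoef_norm_le (n : ℕ) (t : ℝ) : ‖ecoef n t‖ ≤ 2 := by
  rcases n with _ | n
  · simp [ecoef]
  · simp only [ecoef, Nat.succ_ne_zero, if_false, norm_mul,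
      Complex.norm_exp]
    have : ((-Complex.I * (↑(n+1) : ℂ) * (t : ℂ)).re) = 0 := by simp
    rw [this]
    simp

lemma ecoef_continuous (n : ℕ) : Continuous (fun t : ℝ => ecoef n t) := by
  rcases n with _ | n
  · simpa [ecoef] using continuous_const
  · simp only [ecoef, Nat.succ_ne_zero, if_false]
    fun_prop

lemma ecoef_integrable {μ : Measure ℝ} {φ : ℝ → ℂ} (hφ : Integrable φ μ) (n : ℕ) :
    Integrable (fun t => ecoef n t * φ t) μ :=
  hφ.bdd_mul (c := 2) (ecoef_continuous n).aestronglyMeasurable (Filter.Eventually.of_forall fun t => ecoef_norm_le n t)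

lemma pointwiseHasSum (z : ℂ) (hz : ‖z‖ < 1) (t : ℝ) (φt : ℂ) :
    HasSum (fun n : ℕ => z ^ n * (ecoef n t * φt))
      (((Complex.exp (Complex.I * t) + z) / (Complex.exp (Complex.I * t) - z)) * φt) := by
  set a := Complex.exp (Complex.I * t) with ha_def
  have ha : a ≠ 0 := Complex.exp_ne_zero _
  have hna : ‖a‖ = 1 := by
    rw [ha_def, Complex.norm_exp]
    simp
  set u := z * a⁻¹ with hu_def
  have hu : ‖u‖ < 1 := by
    rw [hu_def, norm_mul, norm_inv, hna]
    simpa using hz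
  have h1u : (1 : ℂ) - u ≠ 0 := by
    intro h
    rw [sub_eq_zero] at h
    rw [← h] at hu
    simp at hu
  have haz : a - z ≠ 0 := by
    intro h
    rw [sub_eq_zero] at h
    rw [hu_def, ← h, mul_inv_cancel₀ ha] at hu
    simp at hu
  have h2 := (hasSum_geometric_of_norm_lt_one hu).mul_left (2 : ℂ)
  have h3 : HasSum (fun n : ℕ => if n = 0 then (-1 : ℂ) else 0) (-1) := hasSum_ite_eq 0 (-1)
  have h4 := (h2.add h3).mul_right φt
  have hfun : (fun n : ℕ => (2 * u ^ n + (if n = 0 then (-1 : ℂ) else 0)) * φt)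
      = fun n : ℕ => z ^ n * (ecoef n t * φt) := by
    funext n
    rcases n with _ | n
    · simp [ecoef]
      ring
    · have hinv : a⁻¹ = Complex.exp (-(Complex.I * t)) := by
        rw [ha_def, ← Complex.exp_neg]
      have hexp : (a⁻¹) ^ (n + 1) = Complex.exp (-Complex.I * (↑(n + 1) : ℂ) * (t : ℂ)) := by
        rw [hinv, ← Complex.exp_nat_mul]
        congr 1
        push_cast
        ring
      simp only [ecoef, Nat.succ_ne_zero, if_false, hu_def, mul_pow, hexp]
      ring
  have hval : (2 * (1 - u)⁻¹ + -1) * φt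
      = ((a + z) / (a - z)) * φt := by
    congr 1
    rw [hu_def]
    field_simp
    ring
  rw [hfun, hval] at h4
  exact h4

lemma keyHasSum (μ : Measure ℝ) (φ : ℝ → ℂ) (hφ : Integrable φ μ) (z : ℂ) (hz : ‖z‖ < 1) :
    HasSum (fun n : ℕ => z ^ n * ∫ t, ecoef n t * φ t ∂μ)
      (∫ t, ((Complex.exp (Complex.I * t) + z) / (Complex.exp (Complex.I * t) - z)) * φ t ∂μ) := by
  have hint : ∀ n : ℕ, Integrable (fun t => z ^ n * (ecoef n t * φ t)) μ :=
    fun n => (ecoef_integrable hφ n).const_mul _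
  have hnorm : ∀ n : ℕ, (∫ t, ‖z ^ n * (ecoef n t * φ t)‖ ∂μ)
      ≤ (2 * ∫ t, ‖φ t‖ ∂μ) * ‖z‖ ^ n := by
    intro n
    have hb : ∀ t, ‖z ^ n * (ecoef n t * φ t)‖ ≤ (2 * ‖z‖ ^ n) * ‖φ t‖ := by
      intro t
      rw [norm_mul, norm_mul, norm_pow]
      have h1 := ecoef_norm_le n t
      have h2 := norm_nonneg (φ t)
      have h3 := pow_nonneg (norm_nonneg z) n
      calc ‖z‖ ^ n * (‖ecoef n t‖ * ‖φ t‖)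
          ≤ ‖z‖ ^ n * (2 * ‖φ t‖) :=
            mul_le_mul_of_nonneg_left (mul_le_mul_of_nonneg_right h1 h2) h3
        _ = (2 * ‖z‖ ^ n) * ‖φ t‖ := by ring
    calc (∫ t, ‖z ^ n * (ecoef n t * φ t)‖ ∂μ)
        ≤ ∫ t, (2 * ‖z‖ ^ n) * ‖φ t‖ ∂μ :=
          integral_mono (hint n).norm (hφ.norm.const_mul _) hb
      _ = (2 * ‖z‖ ^ n) * ∫ t, ‖φ t‖ ∂μ := by rw [MeasureTheory.integral_const_mul]
      _ = (2 * ∫ t, ‖φ t‖ ∂μ) * ‖z‖ ^ n := by ring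
  have hsum : Summable (fun n : ℕ => ∫ t, ‖z ^ n * (ecoef n t * φ t)‖ ∂μ) := by
    refine Summable.of_nonneg_of_le
      (fun n => integral_nonneg fun t => norm_nonneg _) hnorm ?_
    exact (summable_geometric_of_lt_one (norm_nonneg z) hz).mul_left _
  have H := hasSum_integral_of_summable_integral_norm hint hsum
  have htsum : (fun t : ℝ => ∑' n : ℕ, z ^ n * (ecoef n t * φ t))
      = fun t : ℝ =>
        ((Complex.exp (Complex.I * t) + z) / (Complex.exp (Complex.I * t) - z)) * φ t :=
    funext fun t => (pointwiseHasSum z hz t (φ t)).tsum_eq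
  rw [htsum] at H
  simpa [MeasureTheory.integral_const_mul] using H

/-- The Taylor coefficients of `Kw w - Ksigma σ`. -/
noncomputable def coefC (σ : Measure ℝ) (w : ℝ → ℝ) (n : ℕ) : ℂ :=
  (1 / (2 * Real.pi) : ℂ) *
    ((∫ t in Set.Icc (-Real.pi) Real.pi, ecoef n t * (w t : ℂ))
      - ∫ t in Set.Icc (-Real.pi) Real.pi, ecoef n t ∂σ)

lemma mainSeries (σ : Measure ℝ) [IsFiniteMeasure σ]
    (w : ℝ → ℝ) (hw : IntegrableOn w (Set.Icc (-Real.pi) Real.pi)) :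
    HasFPowerSeriesOnBall (fun z => Kw w z - Ksigma σ z)
      (FormalMultilinearSeries.ofScalars ℂ (coefC σ w)) 0 1 := by
  set S := Set.Icc (-Real.pi) Real.pi with hS
  haveI : IsFiniteMeasure (volume.restrict S) := by
    constructor
    rw [Measure.restrict_apply_univ, hS, Real.volume_Icc]
    exact ENNReal.ofReal_lt_top
  have hφw : Integrable (fun t => ((w t : ℝ) : ℂ)) (volume.restrict S) := hw.ofReal
  have hφσ : Integrable (fun _ : ℝ => (1 : ℂ)) (σ.restrict S) := integrable_const 1
  constructor
  · -- 1 ≤ radius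
    apply FormalMultilinearSeries.le_radius_of_bound _
      ((1 / (2 * Real.pi)) * ((2 * ∫ t in S, ‖w t‖) + 2 * (σ S).toReal))
    intro n
    rw [FormalMultilinearSeries.ofScalars_norm]
    simp only [NNReal.coe_one, one_pow, mul_one]
    have h1 : ‖∫ t in S, ecoef n t * (w t : ℂ)‖ ≤ 2 * ∫ t in S, ‖w t‖ := by
      calc ‖∫ t in S, ecoef n t * (w t : ℂ)‖
          ≤ ∫ t in S, ‖ecoef n t * (w t : ℂ)‖ := norm_integral_le_integral_norm _
        _ ≤ ∫ t in S, 2 * ‖w t‖ := by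
            refine integral_mono (ecoef_integrable hφw n).norm (hw.norm.const_mul 2) ?_
            intro t
            simp only [norm_mul, Complex.norm_real, Real.norm_eq_abs]
            have h1 := ecoef_norm_le n t
            nlinarith [abs_nonneg (w t), norm_nonneg (ecoef n t)]
        _ = 2 * ∫ t in S, ‖w t‖ := by rw [MeasureTheory.integral_const_mul]
    have h2 : ‖∫ t in S, ecoef n t ∂σ‖ ≤ 2 * (σ S).toReal := by
      calc ‖∫ t in S, ecoef n t ∂σ‖
          ≤ ∫ t in S, ‖ecoef n t‖ ∂σ := norm_integral_le_integral_norm _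
        _ ≤ ∫ _t in S, (2 : ℝ) ∂σ := by
            refine integral_mono ?_ (integrable_const 2) (fun t => ecoef_norm_le n t)
            refine Integrable.mono' (integrable_const (2 : ℝ))
              ((ecoef_continuous n).norm.aestronglyMeasurable)
              (Filter.Eventually.of_forall fun t => ?_)
            simpa using ecoef_norm_le n t
        _ = 2 * (σ S).toReal := by
            rw [integral_const, measureReal_restrict_apply_univ, measureReal_def]
            simp [mul_comm]
    rw [coefC, norm_mul]
    have hpi : ‖(1 / (2 * Real.pi) : ℂ)‖ = 1 / (2 * Real.pi) := by
      rw [norm_div, norm_mul]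
      simp [Real.pi_pos.le, abs_of_pos Real.pi_pos]
    rw [hpi]
    have hpos : (0 : ℝ) ≤ 1 / (2 * Real.pi) := by positivity
    have := norm_sub_le (∫ t in S, ecoef n t * (w t : ℂ)) (∫ t in S, ecoef n t ∂σ)
    nlinarith [norm_nonneg ((∫ t in S, ecoef n t * (w t : ℂ)) - ∫ t in S, ecoef n t ∂σ)]
  · exact zero_lt_one
  · intro y hy
    have hy' : ‖y‖ < 1 := by
      rw [EMetric.mem_ball, edist_zero_right, enorm_eq_nnnorm] at hy
      exact_mod_cast hy
    simp only [FormalMultilinearSeries.ofScalars_apply_eq, zero_add, smul_eq_mul]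
    have Hw := keyHasSum (volume.restrict S) (fun t => ((w t : ℝ) : ℂ)) hφw y hy'
    have Hσ := keyHasSum (σ.restrict S) (fun _ => (1 : ℂ)) hφσ y hy'
    have H := (Hw.sub Hσ).mul_left ((1 / (2 * Real.pi) : ℂ))
    have hfun : (fun n : ℕ => (1 / (2 * Real.pi) : ℂ) *
          ((y ^ n * ∫ t in S, ecoef n t * (w t : ℂ))
            - y ^ n * ∫ t in S, ecoef n t * 1 ∂σ))
        = fun n : ℕ => coefC σ w n * y ^ n := by
      funext n
      simp only [coefC, mul_one]
      ring
    rw [hfun] at H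
    have hval : (1 / (2 * Real.pi) : ℂ) *
          ((∫ t in S, ((Complex.exp (Complex.I * t) + y) / (Complex.exp (Complex.I * t) - y))
              * ((w t : ℝ) : ℂ))
            - ∫ t in S, ((Complex.exp (Complex.I * t) + y) / (Complex.exp (Complex.I * t) - y))
              * 1 ∂σ)
        = Kw w y - Ksigma σ y := by
      simp only [Kw, Ksigma, mul_one]
      ring
    rw [hval] at H
    exact H

theorem statement13 (f B : ℂ → ℂ)
    (hf : DifferentiableOn ℂ f (Metric.ball (0 : ℂ) 1))
    (hB : DifferentiableOn ℂ B (Metric.ball (0 : ℂ) 1))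
    (hf0 : f 0 = 1)
    (hB0re : (B 0).im = 0) (hB0pos : 0 < (B 0).re) (hB0le : (B 0).re ≤ 1)
    (c : ℝ) (hc : c ∈ Set.Ioc (-Real.pi) Real.pi)
    (σ : Measure ℝ) [IsFiniteMeasure σ]
    (w : ℝ → ℝ) (hw : IntegrableOn w (Set.Icc (-Real.pi) Real.pi))
    (hfact : ∀ z ∈ Metric.ball (0 : ℂ) 1,
      f z = B z * Complex.exp (Complex.I * c - Ksigma σ z) * Complex.exp (Kw w z)) :
    c = 0 ∧
    -Real.log ((B 0).re)
      = (1 / (2 * Real.pi)) * ((∫ t in Set.Icc (-Real.pi) Real.pi, w t)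
          - (σ (Set.Icc (-Real.pi) Real.pi)).toReal) ∧
    0 ≤ (1 / (2 * Real.pi)) * ((∫ t in Set.Icc (-Real.pi) Real.pi, w t)
          - (σ (Set.Icc (-Real.pi) Real.pi)).toReal) ∧
    ∀ n : ℕ, 1 ≤ n →
      iteratedDeriv n (fun z => Kw w z - Ksigma σ z) 0 / (n.factorial : ℂ)
        = (1 / Real.pi : ℂ) *
            ((∫ t in Set.Icc (-Real.pi) Real.pi, Complex.exp (-Complex.I * n * t) * (w t : ℂ))
              - ∫ t in Set.Icc (-Real.pi) Real.pi, Complex.exp (-Complex.I * n * t) ∂σ) := by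
  set S := Set.Icc (-Real.pi) Real.pi with hS
  have hπ : Real.pi ≠ 0 := Real.pi_ne_zero
  have hπC : ((Real.pi : ℂ)) ≠ 0 := by exact_mod_cast hπ
  -- evaluation at 0
  set a : ℝ := (1 / (2 * Real.pi)) * (σ S).toReal with ha_def
  set b : ℝ := (1 / (2 * Real.pi)) * (∫ t in S, w t) with hb_def
  have hKσ0 : Ksigma σ 0 = (a : ℂ) := by
    rw [Ksigma]
    have : ∀ t : ℝ, (Complex.exp (Complex.I * t) + 0) / (Complex.exp (Complex.I * t) - 0)
        = (1 : ℂ) := by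
      intro t
      rw [add_zero, sub_zero, div_self (Complex.exp_ne_zero _)]
    simp only [this]
    rw [integral_const, measureReal_restrict_apply_univ, measureReal_def]
    rw [ha_def]
    push_cast
    simp [mul_comm]
    rfl
  have hKw0 : Kw w 0 = (b : ℂ) := by
    rw [Kw]
    have : ∀ t : ℝ, ((Complex.exp (Complex.I * t) + 0) / (Complex.exp (Complex.I * t) - 0))
        * ((w t : ℝ) : ℂ) = ((w t : ℝ) : ℂ) := by
      intro t
      rw [add_zero, sub_zero, div_self (Complex.exp_ne_zero _), one_mul]
    simp only [this]
    have hco := ContinuousLinearMap.integral_comp_comm Complex.ofRealCLM hw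
    simp only [Complex.ofRealCLM_apply] at hco
    rw [hco, hb_def]
    push_cast
    ring
  have h0mem : (0 : ℂ) ∈ Metric.ball (0 : ℂ) 1 := by simp
  have heq := hfact 0 h0mem
  rw [hf0, hKσ0, hKw0] at heq
  have hB0 : B 0 = (((B 0).re : ℝ) : ℂ) := by
    apply Complex.ext <;> simp [hB0re]
  rw [hB0] at heq
  set r : ℝ := (B 0).re with hr_def
  have hexp : Complex.exp (Complex.I * c - (a : ℂ)) * Complex.exp (b : ℂ)
      = Complex.exp (Complex.I * c) * ((Real.exp (b - a) : ℝ) : ℂ) := by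
    rw [← Complex.exp_add, Complex.ofReal_exp, ← Complex.exp_add]
    congr 1
    push_cast
    ring
  rw [mul_assoc, hexp] at heq
  -- heq : 1 = ↑r * (exp (I c) * ↑(Real.exp (b - a)))
  have habs := congrArg norm heq
  simp only [norm_one, norm_mul, Complex.norm_real, Real.norm_eq_abs, Complex.norm_exp] at habs
  have hre : (Complex.I * (c : ℂ)).re = 0 := by simp
  rw [hre, Real.exp_zero] at habs
  rw [abs_of_pos hB0pos, abs_of_pos (Real.exp_pos _)] at habs
  -- habs : 1 = r * (1 * Real.exp (b - a))
  have hr1 : r * Real.exp (b - a) = 1 := by linarith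
  have hrne : r ≠ 0 := ne_of_gt hB0pos
  have hexpval : Real.exp (b - a) = 1 / r := by
    field_simp
    linarith
  have hba : b - a = -Real.log r := by
    rw [← Real.log_exp (b - a), hexpval, one_div, Real.log_inv]
  have hpart2 : -Real.log r
      = (1 / (2 * Real.pi)) * ((∫ t in S, w t) - (σ S).toReal) := by
    rw [← hba, hb_def, ha_def]
    ring
  have hpart3 : 0 ≤ (1 / (2 * Real.pi)) * ((∫ t in S, w t) - (σ S).toReal) := by
    rw [← hpart2]
    have := Real.log_nonpos hB0pos.le hB0le
    linarith
  -- c = 0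
  have hcc : c = 0 := by
    have hrc : ((r : ℝ) : ℂ) * ((Real.exp (b - a) : ℝ) : ℂ) = 1 := by
      rw [← Complex.ofReal_mul, hr1]
      norm_num
    have hexp1 : Complex.exp (Complex.I * c) = 1 := by
      have : (1 : ℂ) = Complex.exp (Complex.I * c)
          * (((r : ℝ) : ℂ) * ((Real.exp (b - a) : ℝ) : ℂ)) := by
        rw [heq]; ring
      rw [hrc, mul_one] at this
      exact this.symm
    rw [Complex.exp_eq_one_iff] at hexp1
    obtain ⟨k, hk⟩ := hexp1
    have hkc : (c : ℂ) = (k : ℂ) * (2 * Real.pi) := by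
      apply mul_left_cancel₀ Complex.I_ne_zero
      rw [hk]
      ring
    have hkr : c = (k : ℝ) * (2 * Real.pi) := by exact_mod_cast hkc
    rcases lt_trichotomy k 0 with hneg | hzero | hpos
    · exfalso
      have hk1 : (k : ℝ) ≤ -1 := by
        have : k ≤ -1 := by omega
        exact_mod_cast this
      have := hc.1
      nlinarith [Real.pi_pos]
    · rw [hzero] at hkr
      simpa using hkr
    · exfalso
      have hk1 : (1 : ℝ) ≤ (k : ℝ) := by exact_mod_cast hpos
      have := hc.2
      nlinarith [Real.pi_pos]
  refine ⟨hcc, hpart2, hpart3, ?_⟩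
  -- Taylor coefficients
  intro n hn
  have hps := mainSeries σ w hw
  have h1 := hps.factorial_smul (1 : ℂ) n
  have hne : (n.factorial : ℂ) ≠ 0 := by exact_mod_cast n.factorial_ne_zero
  have hiter : iteratedDeriv n (fun z => Kw w z - Ksigma σ z) 0
      = (n.factorial : ℂ) * coefC σ w n := by
    rw [iteratedDeriv_eq_iteratedFDeriv, ← h1,
      FormalMultilinearSeries.ofScalars_apply_eq]
    simp [nsmul_eq_mul]
  rw [hiter, mul_comm, mul_div_assoc, div_self hne, mul_one]
  have hnne : n ≠ 0 := by omega
  have hec : ∀ t : ℝ, ecoef n t = 2 * Complex.exp (-Complex.I * n * t) := by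
    intro t
    simp [ecoef, hnne]
  rw [coefC]
  simp only [hec]
  have hw2 : (∫ t in S, (2 * Complex.exp (-Complex.I * n * t)) * ((w t : ℝ) : ℂ))
      = 2 * ∫ t in S, Complex.exp (-Complex.I * n * t) * ((w t : ℝ) : ℂ) := by
    rw [← MeasureTheory.integral_const_mul]
    congr 1
    funext t
    ring
  have hσ2 : (∫ t in S, 2 * Complex.exp (-Complex.I * n * t) ∂σ)
      = 2 * ∫ t in S, Complex.exp (-Complex.I * n * t) ∂σ := by
    rw [MeasureTheory.integral_const_mul]
  rw [hw2, hσ2]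
  have : ((2 : ℂ) * Real.pi) ≠ 0 := by
    push_cast
    exact mul_ne_zero two_ne_zero hπC
  field_simp
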